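/- If S is an A-compatible closed subspace of H, then the A-symmetric idempotent with range S is unique: if Q₁, Q₂ are idempotents with range S and Q₁*A = AQ₁, Q₂*A = AQ₂, then Q₁ = Q₂. -/

import Mathlib

open ContinuousLinearMap
open scoped InnerProductSpace

/-- The `A`-symmetric idempotent with a given range is unique: if `Q₁, Q₂` are idempotents
with the same range `S` and `Q₁* A = A Q₁`, `Q₂* A = A Q₂`, then `Q₁ = Q₂`. -/
theorem a_symmetric_idempotent_unique
    {H : Type*} [NormedAddCommGroup H] [InnerProductSpace ℂ H] [CompleteSpace H]
    (A : H →L[ℂ] H) (hA : A.IsPositive) (hAinj : Function.Injective A)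
    (S : Submodule ℂ H) (hS : IsClosed (S : Set H))
    (Q₁ Q₂ : H →L[ℂ] H) (hQ₁ : Q₁ ∘L Q₁ = Q₁) (hQ₂ : Q₂ ∘L Q₂ = Q₂)
    (hR₁ : Set.range Q₁ = (S : Set H)) (hR₂ : Set.range Q₂ = (S : Set H))
    (hA₁ : (adjoint Q₁) ∘L A = A ∘L Q₁) (hA₂ : (adjoint Q₂) ∘L A = A ∘L Q₂) :
    Q₁ = Q₂ := by
  have hAsa : IsSelfAdjoint A := hA.isSelfAdjoint
  have hAsa' : ∀ x y : H, ⟪A x, y⟫_ℂ = ⟪x, A y⟫_ℂ := fun x y => by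
    conv_lhs => rw [← hAsa.adjoint_eq]
    rw [adjoint_inner_left]
  -- Q₁ fixes the common range
  have h12 : Q₁ ∘L Q₂ = Q₂ := by
    ext x
    have hx : Q₂ x ∈ Set.range Q₁ := by rw [hR₁, ← hR₂]; exact ⟨x, rfl⟩
    obtain ⟨w, hw⟩ := hx
    have : Q₁ (Q₁ w) = Q₁ w := by
      have := congrArg (fun T : H →L[ℂ] H => T w) hQ₁
      simpa using this
    simp only [comp_apply, ← hw, this]
  have h21 : Q₂ ∘L Q₁ = Q₁ := by
    ext x
    have hx : Q₁ x ∈ Set.range Q₂ := by rw [hR₂, ← hR₁]; exact ⟨x, rfl⟩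
    obtain ⟨w, hw⟩ := hx
    have : Q₂ (Q₂ w) = Q₂ w := by
      have := congrArg (fun T : H →L[ℂ] H => T w) hQ₂
      simpa using this
    simp only [comp_apply, ← hw, this]
  set D := Q₁ - Q₂ with hD
  have hDD : D ∘L D = 0 := by
    simp only [hD, sub_comp, comp_sub, hQ₁, hQ₂, h12, h21]
    abel
  have hDA : (adjoint D) ∘L A = A ∘L D := by
    simp only [hD, map_sub, sub_comp, comp_sub, hA₁, hA₂]
  -- D* A D = 0
  have hDAD : (adjoint D) ∘L (A ∘L D) = 0 := by
    rw [← comp_assoc, hDA, comp_assoc, hDD, comp_zero]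
  -- the semi-inner product defined by A
  let c : PreInnerProductSpace.Core ℂ H :=
    { inner := fun x y => ⟪A x, y⟫_ℂ
      conj_inner_symm := fun x y => by
        simp only [← inner_conj_symm (A y) x, starRingEnd_self_apply, hAsa' y x, ← hAsa' x y]
      re_inner_nonneg := fun x => (RCLike.nonneg_iff.mp (hA.inner_nonneg_left x)).1
      add_left := fun x y z => by simp [inner_add_left]
      smul_left := fun x y r => by simp [inner_smul_left]; ring }
  have key : ∀ x : H, A (D x) = 0 := by
    intro x
    have hself : ⟪A (D x), D x⟫_ℂ = 0 := by
      rw [← adjoint_inner_left D]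
      have := congrArg (fun T : H →L[ℂ] H => T x) hDAD
      simp only [comp_apply, zero_apply] at this
      rw [this, inner_zero_left]
    have hcs : ‖⟪A (D x), A (D x)⟫_ℂ‖ * ‖⟪A (A (D x)), D x⟫_ℂ‖ ≤
        Complex.re ⟪A (D x), D x⟫_ℂ * Complex.re ⟪A (A (D x)), A (D x)⟫_ℂ :=
      @InnerProductSpace.Core.inner_mul_inner_self_le ℂ H _ _ _ c (D x) (A (D x))
    have e2 : ⟪A (A (D x)), D x⟫_ℂ = ⟪A (D x), A (D x)⟫_ℂ := hAsa' _ _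
    rw [hself, e2] at hcs
    simp only [Complex.zero_re, zero_mul] at hcs
    have h2 : ‖⟪A (D x), A (D x)⟫_ℂ‖ = 0 := by
      nlinarith [norm_nonneg (⟪A (D x), A (D x)⟫_ℂ)]
    have h3 : ⟪A (D x), A (D x)⟫_ℂ = 0 := norm_eq_zero.mp h2
    exact inner_self_eq_zero.mp h3
  have hD0 : D = 0 := by
    ext x
    have := key x
    have : A (D x) = A 0 := by simpa using this
    simpa using hAinj this
  have := sub_eq_zero.mp (hD0 : Q₁ - Q₂ = 0)
  exact this
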